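/- Let θ be irrational with partial quotients (a_k) and convergent denominators (q_k). If a_{k+1} = 1 then q_{k+1}(‖q_{k-1}θ‖ + ‖q_k θ‖) < 2. -/

import Mathlib

open Filter

/-- distance from `x` to the nearest integer -/
noncomputable def nint (x : ℝ) : ℝ := ⨅ m : ℤ, |x - (m : ℝ)|

/-- denominators of the continued fraction convergents of `θ` (`qd θ 0 = 1`) -/
noncomputable def qd (θ : ℝ) (n : ℕ) : ℝ := (GenContFract.of θ).dens n

/-- the `(n+1)`-st partial quotient `a_{n+1}` of `θ` is `partQuot θ n` -/
noncomputable def partQuot (θ : ℝ) (n : ℕ) : Option ℝ := (GenContFract.of θ).partDens.get? n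

/-- irrationality exponent `w(θ) = sup{ s > 0 : liminf_j j^s ‖jθ‖ = 0 }`, as an extended real -/
noncomputable def irrExp (θ : ℝ) : EReal :=
  sSup {w : EReal | ∃ s : ℝ, w = (s : EReal) ∧ 0 < s ∧
    Filter.atTop.liminf (fun j : ℕ => (j : ℝ) ^ s * nint (j * θ)) = 0}

/-- `G_n = ⋃_{i=1}^n B(iθ, n^{-τ})` in the circle `T = ℝ/ℤ` -/
noncomputable def Gset (θ τ : ℝ) (n : ℕ) : Set (AddCircle (1 : ℝ)) :=
  ⋃ i ∈ Finset.Icc 1 n, Metric.ball (((i : ℝ) * θ : ℝ) : AddCircle (1 : ℝ)) ((n : ℝ) ^ (-τ))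

/-- `F_k = ⋂_{n=q_k+1}^{q_{k+1}} G_n` -/
noncomputable def Fset (θ τ : ℝ) (k : ℕ) : Set (AddCircle (1 : ℝ)) :=
  ⋂ n ∈ {n : ℕ | qd θ k < (n : ℝ) ∧ (n : ℝ) ≤ qd θ (k + 1)}, Gset θ τ n

/-- the Dirichlet uniform approximation set `U_τ[θ] ⊆ T` -/
noncomputable def Uset (θ τ : ℝ) : Set (AddCircle (1 : ℝ)) :=
  {y | ∀ᶠ Q : ℕ in atTop, ∃ n : ℕ, 1 ≤ n ∧ n ≤ Q ∧
    dist (((n : ℝ) * θ : ℝ) : AddCircle (1 : ℝ)) y < (Q : ℝ) ^ (-τ)}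


open GenContFract in
lemma myNotTerm (θ : ℝ) (hθ : Irrational θ) (n : ℕ) :
    ¬(GenContFract.of θ).TerminatedAt n := by
  intro h
  obtain ⟨q, hq⟩ := (terminates_iff_rat θ).mp ⟨n, h⟩
  exact hθ ⟨q, hq.symm⟩

open GenContFract in
lemma mySget (θ : ℝ) (hθ : Irrational θ) (n : ℕ) :
    ∃ gp : Pair ℝ, (GenContFract.of θ).s.get? n = some gp ∧ gp.a = 1 ∧ ∃ z : ℤ, gp.b = (z : ℝ) := by
  obtain ⟨gp, hgp⟩ : ∃ gp, (GenContFract.of θ).s.get? n = some gp :=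
    Option.ne_none_iff_exists'.mp (myNotTerm θ hθ n)
  obtain ⟨h1, h2⟩ := of_partNum_eq_one_and_exists_int_partDen_eq hgp
  exact ⟨gp, hgp, h1, h2⟩

open GenContFract in
lemma myNumInt (θ : ℝ) (hθ : Irrational θ) : ∀ n, ∃ z : ℤ, (GenContFract.of θ).nums n = (z : ℝ) := by
  intro n
  induction n using Nat.twoStepInduction with
  | zero => exact ⟨⌊θ⌋, by rw [zeroth_num_eq_h, of_h_eq_floor]⟩
  | one =>
    obtain ⟨gp, hgp, ha1, z, hb⟩ := mySget θ hθ 0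
    exact ⟨z * ⌊θ⌋ + 1, by rw [first_num_eq hgp, ha1, hb, of_h_eq_floor]; push_cast; ring⟩
  | more n ih ih1 =>
    obtain ⟨gp, hgp, ha1, z, hb⟩ := mySget θ hθ (n + 1)
    obtain ⟨z0, h0⟩ := ih
    obtain ⟨z1, h1⟩ := ih1
    refine ⟨z * z1 + z0, ?_⟩
    rw [nums_recurrence hgp h0 h1, ha1, hb]
    push_cast; ring

open GenContFract in
lemma myDenPos (θ : ℝ) (hθ : Irrational θ) (n : ℕ) : (1 : ℝ) ≤ (GenContFract.of θ).dens n := by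
  have h := succ_nth_fib_le_of_nth_den (v := θ) (n := n) (Or.inr (myNotTerm θ hθ (n - 1)))
  refine le_trans ?_ h
  have : 1 ≤ Nat.fib (n + 1) := Nat.fib_pos.mpr n.succ_pos
  exact_mod_cast this

/-- the signed error, normalized to be positive -/
noncomputable def Eq' (θ : ℝ) (n : ℕ) : ℝ :=
  (-1) ^ n * ((GenContFract.of θ).dens n * θ - (GenContFract.of θ).nums n)

open GenContFract GenContFract.IntFractPair in
lemma myEpos (θ : ℝ) (hθ : Irrational θ) (n : ℕ) : 0 < Eq' θ n := by
  have hnt : IntFractPair.stream θ (n + 1) ≠ none := fun h =>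
    myNotTerm θ hθ n (of_terminatedAt_n_iff_succ_nth_intFractPair_stream_eq_none.mpr h)
  obtain ⟨ifp1, h1⟩ := Option.ne_none_iff_exists'.mp hnt
  obtain ⟨ifp, hst, hfr, -⟩ := succ_nth_stream_eq_some_iff.mp h1
  have hsub := sub_convs_eq hst
  simp only [hfr, if_false] at hsub
  have hfr0 : 0 < ifp.fr := lt_of_le_of_ne (nth_stream_fr_nonneg hst) (Ne.symm hfr)
  have hBden : ((GenContFract.of θ).contsAux (n + 1)).b = (GenContFract.of θ).dens n := by
    rw [den_eq_conts_b, nth_cont_eq_succ_nth_contAux]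
  rw [hBden] at hsub
  have hB : (0 : ℝ) < (GenContFract.of θ).dens n := lt_of_lt_of_le one_pos (myDenPos θ hθ n)
  have hpB : (0 : ℝ) ≤ ((GenContFract.of θ).contsAux n).b := zero_le_of_contsAux_b
  set pB := ((GenContFract.of θ).contsAux n).b
  have hd2 : 0 < ifp.fr⁻¹ * (GenContFract.of θ).dens n + pB :=
    add_pos_of_pos_of_nonneg (mul_pos (inv_pos.mpr hfr0) hB) hpB
  have hconv : (GenContFract.of θ).dens n * θ - (GenContFract.of θ).nums n
      = (GenContFract.of θ).dens n * (θ - (GenContFract.of θ).convs n) := by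
    rw [conv_eq_num_div_den]
    field_simp
  unfold Eq'
  rw [hconv, hsub]
  have hkey : 0 < (GenContFract.of θ).dens n * ((GenContFract.of θ).dens n * (ifp.fr⁻¹ * (GenContFract.of θ).dens n + pB))⁻¹ :=
    mul_pos hB (inv_pos.mpr (mul_pos hB hd2))
  have hsq : ((-1 : ℝ) ^ n) * ((-1 : ℝ) ^ n) = 1 := by
    rcases neg_one_pow_eq_or ℝ n with h | h <;> rw [h] <;> norm_num
  have heq : (-1 : ℝ) ^ n * ((GenContFract.of θ).dens n *
      ((-1) ^ n / ((GenContFract.of θ).dens n * (ifp.fr⁻¹ * (GenContFract.of θ).dens n + pB))))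
      = ((-1 : ℝ) ^ n * (-1 : ℝ) ^ n) * ((GenContFract.of θ).dens n *
        ((GenContFract.of θ).dens n * (ifp.fr⁻¹ * (GenContFract.of θ).dens n + pB))⁻¹) := by
    ring
  rw [heq, hsq, one_mul]
  exact hkey

open GenContFract in
lemma myDet (θ : ℝ) (hθ : Irrational θ) (m : ℕ) :
    (GenContFract.of θ).nums m * (GenContFract.of θ).dens (m + 1)
      - (GenContFract.of θ).dens m * (GenContFract.of θ).nums (m + 1) = (-1) ^ (m + 1) := by
  have h : ((GenContFract.of θ).contsAux (m + 1)).a * ((GenContFract.of θ).contsAux (m + 2)).b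
      - ((GenContFract.of θ).contsAux (m + 1)).b * ((GenContFract.of θ).contsAux (m + 2)).a
      = (-1) ^ (m + 1) :=
    by
      have h' := SimpContFract.determinant (s := SimpContFract.of θ) (n := m) (myNotTerm θ hθ m)
      exact h'
  simpa [num_eq_conts_a, den_eq_conts_b, nth_cont_eq_succ_nth_contAux] using h

open GenContFract in
lemma myKey (θ : ℝ) (hθ : Irrational θ) (m : ℕ) :
    (GenContFract.of θ).dens (m + 1) * Eq' θ m + (GenContFract.of θ).dens m * Eq' θ (m + 1) = 1 := by
  have hd := myDet θ hθ m
  unfold Eq'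
  rw [pow_succ] at hd ⊢
  rcases neg_one_pow_eq_or ℝ m with h | h <;> rw [h] at hd ⊢
  · linear_combination -hd
  · linear_combination hd

lemma myNintLe (x : ℝ) (m : ℤ) : nint x ≤ |x - (m : ℝ)| := by
  apply ciInf_le
  exact ⟨0, by rintro y ⟨i, rfl⟩; exact abs_nonneg _⟩

open GenContFract in
lemma myNintLeE (θ : ℝ) (hθ : Irrational θ) (n : ℕ) :
    nint ((GenContFract.of θ).dens n * θ) ≤ Eq' θ n := by
  obtain ⟨z, hz⟩ := myNumInt θ hθ n
  have h := myNintLe ((GenContFract.of θ).dens n * θ) z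
  rw [← hz] at h
  have hE := myEpos θ hθ n
  have habs : |(GenContFract.of θ).dens n * θ - (GenContFract.of θ).nums n| = Eq' θ n := by
    rcases neg_one_pow_eq_or ℝ n with h1 | h1 <;> unfold Eq' at hE ⊢ <;> rw [h1] at hE ⊢
    · rw [one_mul] at hE ⊢; exact abs_of_pos hE
    · rw [neg_one_mul] at hE ⊢; exact abs_of_neg (by linarith)
  rw [← habs]; exact h

open GenContFract in
lemma myRec (θ : ℝ) (hθ : Irrational θ) (j : ℕ)
    (hb : (GenContFract.of θ).partDens.get? (j + 1) = some 1) :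
    (GenContFract.of θ).dens (j + 2) = (GenContFract.of θ).dens (j + 1) + (GenContFract.of θ).dens j
    ∧ Eq' θ j = Eq' θ (j + 1) + Eq' θ (j + 2) := by
  obtain ⟨gp, hgp, hgpb⟩ := exists_s_b_of_partDen hb
  have hgpa : gp.a = 1 := (of_partNum_eq_one_and_exists_int_partDen_eq hgp).1
  have hdens : (GenContFract.of θ).dens (j + 2)
      = (GenContFract.of θ).dens (j + 1) + (GenContFract.of θ).dens j := by
    rw [dens_recurrence hgp rfl rfl, hgpa, hgpb]; ring
  have hnums : (GenContFract.of θ).nums (j + 2)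
      = (GenContFract.of θ).nums (j + 1) + (GenContFract.of θ).nums j := by
    rw [nums_recurrence hgp rfl rfl, hgpa, hgpb]; ring
  refine ⟨hdens, ?_⟩
  unfold Eq'
  rw [hdens, hnums]
  rw [pow_succ, pow_succ]
  ring


open GenContFract in
theorem stmt_6 (θ : ℝ) (hθ : Irrational θ) (k : ℕ) (hk : 1 ≤ k)
    (ha : partQuot θ k = some 1) :
    qd θ (k + 1) * (nint (qd θ (k - 1) * θ) + nint (qd θ k * θ)) < 2 := by
  obtain ⟨j, rfl⟩ : ∃ j, k = j + 1 := ⟨k - 1, (Nat.succ_pred_eq_of_pos hk).symm⟩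
  have hb : (GenContFract.of θ).partDens.get? (j + 1) = some 1 := ha
  obtain ⟨hq2eq, hErec⟩ := myRec θ hθ j hb
  have hid := myKey θ hθ (j + 1)
  have hE2 := myEpos θ hθ (j + 2)
  have hn0 := myNintLeE θ hθ j
  have hn1 := myNintLeE θ hθ (j + 1)
  have hq0 : (1 : ℝ) ≤ (GenContFract.of θ).dens j := myDenPos θ hθ j
  have hq1 : (1 : ℝ) ≤ (GenContFract.of θ).dens (j + 1) := myDenPos θ hθ (j + 1)
  have hq2 : (1 : ℝ) ≤ (GenContFract.of θ).dens (j + 2) := myDenPos θ hθ (j + 2)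
  have hmono : (GenContFract.of θ).dens j ≤ (GenContFract.of θ).dens (j + 1) := of_den_mono
  simp only [qd, Nat.add_sub_cancel]
  rcases lt_or_eq_of_le hmono with hlt | heq
  · -- q_{j} < q_{j+1}
    have hstep : nint ((GenContFract.of θ).dens j * θ) + nint ((GenContFract.of θ).dens (j + 1) * θ)
        ≤ (Eq' θ (j + 1) + Eq' θ (j + 2)) + Eq' θ (j + 1) := by
      rw [← hErec]; exact add_le_add hn0 hn1
    have hmul := mul_le_mul_of_nonneg_left hstep (le_trans zero_le_one hq2)
    nlinarith [mul_pos (sub_pos.mpr hlt) hE2]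
  · -- q_j = q_{j+1}
    rw [heq]
    have hmul := mul_le_mul_of_nonneg_left (add_le_add hn1 hn1) (le_trans zero_le_one hq2)
    nlinarith [mul_pos (lt_of_lt_of_le zero_lt_one hq1) hE2]
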